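/- Let f₁, f₂ : X → B be mappings into the closed unit ball B of ℝⁿ, each having an (η, ε)-unique k-means solution on X. If d_{L1}^X(f₁, f₂) < η/12, then Δ_X(C^{f₁}_X, C^{f₂}_X) < 2ε. -/

import Mathlib

open scoped BigOperators symmDiff

noncomputable section

/-- Euclidean space `ℝ^n`. -/
abbrev Euc (n : ℕ) : Type := EuclideanSpace ℝ (Fin n)

variable {X : Type*} [Fintype X] [DecidableEq X] {n k : ℕ}

/-- `C` is a `k`-clustering of `X`: an ordered tuple of pairwise disjoint subsets covering `X`. -/
def IsClustering (k : ℕ) (C : Fin k → Finset X) : Prop :=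
  (∀ i j, i ≠ j → Disjoint (C i) (C j)) ∧ Finset.univ.biUnion C = Finset.univ

/-- Sample-based clustering difference `Δ_S`. -/
def clusterDiffOn (k : ℕ) (S : Finset X) (C₁ C₂ : Fin k → Finset X) : ℝ :=
  ⨅ σ : Equiv.Perm (Fin k),
    (1 / (S.card : ℝ)) * ∑ i, (((C₁ i ∩ S) ∆ (C₂ (σ i) ∩ S)).card : ℝ)

/-- Clustering difference `Δ_X`. -/
def clusterDiff (k : ℕ) (C₁ C₂ : Fin k → Finset X) : ℝ :=
  clusterDiffOn k Finset.univ C₁ C₂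

/-- k-means cost of `X` under mapping `f` with a `k`-tuple of centers `μ`. -/
def costCenters (k : ℕ) (f : X → Euc n) (μ : Fin k → Euc n) : ℝ :=
  (1 / (Fintype.card X : ℝ)) * ∑ x, ⨅ j : Fin k, ‖f x - μ j‖ ^ 2

/-- k-means cost of a clustering `C` under `f`, with per-cluster optimal centers. -/
def costClustering (k : ℕ) (f : X → Euc n) (C : Fin k → Finset X) : ℝ :=
  (1 / (Fintype.card X : ℝ)) * ∑ i, ⨅ μ : Euc n, ∑ x ∈ C i, ‖f x - μ‖ ^ 2

/-- Index of a nearest center to `f x`, ties broken by smallest index. -/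
def nearestIdx [NeZero k] (f : X → Euc n) (μ : Fin k → Euc n) (x : X) : Fin k :=
  (Finset.univ.filter fun j => ∀ l, ‖f x - μ j‖ ≤ ‖f x - μ l‖).min' (by
    have hk : 0 < k := Nat.pos_of_ne_zero (NeZero.ne k)
    obtain ⟨j, -, hj⟩ := Finset.exists_min_image (Finset.univ : Finset (Fin k))
      (fun j => ‖f x - μ j‖) ⟨⟨0, hk⟩, Finset.mem_univ _⟩
    exact ⟨j, Finset.mem_filter.mpr ⟨Finset.mem_univ _, fun l => hj l (Finset.mem_univ _)⟩⟩)

/-- The Voronoi `k`-clustering of `X` induced by `(f, μ)`, ties broken by smallest index. -/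
def voronoiClustering [NeZero k] (f : X → Euc n) (μ : Fin k → Euc n) : Fin k → Finset X :=
  fun i => Finset.univ.filter fun x => nearestIdx f μ x = i

/-- `f` has a unique optimal k-means clustering `Cf`: minimizers of the center-based cost
exist and all of them induce the same Voronoi clustering, namely `Cf`. -/
def HasUniqueOptClustering [NeZero k] (f : X → Euc n) (Cf : Fin k → Finset X) : Prop :=
  (∃ μ : Fin k → Euc n, ∀ ν, costCenters k f μ ≤ costCenters k f ν) ∧
  ∀ μ : Fin k → Euc n, (∀ ν, costCenters k f μ ≤ costCenters k f ν) →
    voronoiClustering f μ = Cf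

/-- `f` has an `(η, ε)`-unique k-means solution on `X`, with optimal clustering `Cf`. -/
def HasUniqueSolution [NeZero k] (f : X → Euc n) (Cf : Fin k → Finset X) (η ε : ℝ) : Prop :=
  HasUniqueOptClustering f Cf ∧
  ∀ P : Fin k → Finset X, IsClustering k P →
    costClustering k f P < costClustering k f Cf + η → clusterDiff k Cf P < ε

/-- `L₁` distance `d_{L1}^X` between two functions on `X`. -/
def dL1 {E : Type*} [SeminormedAddGroup E] (f g : X → E) : ℝ :=
  (1 / (Fintype.card X : ℝ)) * ∑ x, ‖f x - g x‖

/-- The indicator function `h_σ^{f₁,f₂}` of `∪_i (C¹_i Δ C²_{σ(i)})`. -/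
def indSymmDiff (C₁ C₂ : Fin k → Finset X) (σ : Equiv.Perm (Fin k)) : X → ℝ :=
  fun x => if x ∈ Finset.univ.biUnion (fun i => C₁ i ∆ C₂ (σ i)) then 1 else 0

/-- The class `H^F`, where `Cf f` is the optimal clustering of `f`. -/
def HF (F : Set (X → Euc n)) (Cf : (X → Euc n) → Fin k → Finset X) : Set (X → ℝ) :=
  {h | ∃ f₁ ∈ F, ∃ f₂ ∈ F, ∃ σ : Equiv.Perm (Fin k), h = indSymmDiff (Cf f₁) (Cf f₂) σ}

/-- Internal covering number `N(G, d, r)`. -/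
def coveringNumber {α : Type*} (G : Set α) (d : α → α → ℝ) (r : ℝ) : ℕ :=
  sInf {m : ℕ | ∃ T : Finset α, ↑T ⊆ G ∧ T.card = m ∧ ∀ g ∈ G, ∃ t ∈ T, d g t ≤ r}

/-- External covering number `N_ext(G, d, r)`. -/
def extCoveringNumber {α : Type*} (G : Set α) (d : α → α → ℝ) (r : ℝ) : ℕ :=
  sInf {m : ℕ | ∃ T : Finset α, T.card = m ∧ ∀ g ∈ G, ∃ t ∈ T, d g t ≤ r}

/-- `G` pseudo-shatters the finite set `S`. -/
def PseudoShatters (G : Set (X → ℝ)) (S : Finset X) : Prop :=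
  ∃ r : X → ℝ, ∀ b : X → Bool, ∃ g ∈ G, ∀ x ∈ S, (r x < g x ↔ b x = true)

/-- Pseudo-dimension of a class of real-valued functions. -/
def pdim (G : Set (X → ℝ)) : ℕ :=
  sSup {m : ℕ | ∃ S : Finset X, S.card = m ∧ PseudoShatters G S}

/-- The class of `i`-th coordinate functions of members of `F`. -/
def coordClass (F : Set (X → Euc n)) (i : Fin n) : Set (X → ℝ) :=
  {g | ∃ f ∈ F, g = fun x => f x i}

/-- Vector-valued pseudo-dimension `Pdim(F) = n · max_i Pdim(F_i)`. -/
def vPdim (n : ℕ) (F : Set (X → Euc n)) : ℕ :=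
  n * Finset.univ.sup fun i : Fin n => pdim (coordClass F i)


section Helpers

variable {X : Type*} [Fintype X] [DecidableEq X] {n k : ℕ}

lemma proj_ball {n : ℕ} (μ : Euc n) :
    ∃ μ' : Euc n, ‖μ'‖ ≤ 1 ∧ ∀ a : Euc n, ‖a‖ ≤ 1 → ‖a - μ'‖ ≤ ‖a - μ‖ := by
  by_cases h : ‖μ‖ ≤ 1
  · exact ⟨μ, h, fun a _ => le_rfl⟩
  · push_neg at h
    have hμ : (0:ℝ) < ‖μ‖ := by linarith
    have h1 : ‖μ‖⁻¹ * ‖μ‖ = 1 := inv_mul_cancel₀ (by positivity)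
    have ht : ‖μ‖⁻¹ ≤ 1 := by
      rw [inv_le_one_iff₀]; right; linarith
    have ht0 : 0 < ‖μ‖⁻¹ := by positivity
    refine ⟨‖μ‖⁻¹ • μ, ?_, ?_⟩
    · rw [norm_smul, norm_inv, norm_norm, h1]
    · intro a ha
      have hsq : ‖a - ‖μ‖⁻¹ • μ‖ ^ 2 ≤ ‖a - μ‖ ^ 2 := by
        rw [norm_sub_sq_real, norm_sub_sq_real, real_inner_smul_right, norm_smul,
          norm_inv, norm_norm, h1]
        have hi : inner ℝ a μ ≤ ‖a‖ * ‖μ‖ := real_inner_le_norm a μ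
        have hna : (0:ℝ) ≤ ‖a‖ := norm_nonneg _
        have hip : inner ℝ a μ ≤ ‖μ‖ := hi.trans (by nlinarith)
        have key : (1-‖μ‖⁻¹)*(inner ℝ a μ) ≤ (1-‖μ‖⁻¹)*‖μ‖ :=
          mul_le_mul_of_nonneg_left hip (by linarith)
        have h2 : (1-‖μ‖⁻¹)*‖μ‖ = ‖μ‖ - 1 := by field_simp
        nlinarith [sq_nonneg (‖μ‖-1)]
      exact le_of_pow_le_pow_left₀ (by norm_num) (norm_nonneg _) hsq

lemma sq_pert {n : ℕ} {a b μ : Euc n} (ha : ‖a‖ ≤ 1) (hb : ‖b‖ ≤ 1) (hμ : ‖μ‖ ≤ 1) :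
    ‖a - μ‖ ^ 2 ≤ ‖b - μ‖ ^ 2 + 4 * ‖a - b‖ := by
  have h1 : ‖a - μ‖ ≤ ‖b - μ‖ + ‖a - b‖ := by
    have := norm_add_le (b - μ) (a - b)
    have he : (b - μ) + (a - b) = a - μ := by abel
    rw [he] at this; linarith
  have h2 : ‖a - μ‖ ≤ 2 := (norm_sub_le a μ).trans (by linarith)
  have h3 : ‖b - μ‖ ≤ 2 := (norm_sub_le b μ).trans (by linarith)
  have h4 : (0:ℝ) ≤ ‖a - b‖ := norm_nonneg _
  have h5 : (0:ℝ) ≤ ‖a - μ‖ := norm_nonneg _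
  have h6 : (0:ℝ) ≤ ‖b - μ‖ := norm_nonneg _
  nlinarith [mul_le_mul_of_nonneg_left h1 h5]

lemma bdd0 {ι : Sort*} (g : ι → ℝ) (hg : ∀ i, 0 ≤ g i) : BddBelow (Set.range g) :=
  ⟨0, by rintro y ⟨i, rfl⟩; exact hg i⟩

lemma sum_sq_nonneg (s : Finset X) (f : X → Euc n) (μ : Euc n) :
    0 ≤ ∑ x ∈ s, ‖f x - μ‖ ^ 2 :=
  Finset.sum_nonneg fun x _ => by positivity

lemma inf_pert (s : Finset X) (f g : X → Euc n) (hf : ∀ x, ‖f x‖ ≤ 1)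
    (hg : ∀ x, ‖g x‖ ≤ 1) :
    (⨅ μ : Euc n, ∑ x ∈ s, ‖f x - μ‖ ^ 2) ≤
      (⨅ μ : Euc n, ∑ x ∈ s, ‖g x - μ‖ ^ 2) + 4 * ∑ x ∈ s, ‖f x - g x‖ := by
  rw [← sub_le_iff_le_add]
  apply le_ciInf
  intro μ
  rw [sub_le_iff_le_add]
  obtain ⟨μ', hμ'1, hμ'2⟩ := proj_ball μ
  have hle : (⨅ ν : Euc n, ∑ x ∈ s, ‖f x - ν‖ ^ 2) ≤ ∑ x ∈ s, ‖f x - μ'‖ ^ 2 :=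
    ciInf_le (bdd0 _ fun ν => sum_sq_nonneg s f ν) μ'
  refine hle.trans ?_
  calc ∑ x ∈ s, ‖f x - μ'‖ ^ 2
      ≤ ∑ x ∈ s, (‖g x - μ'‖ ^ 2 + 4 * ‖f x - g x‖) :=
        Finset.sum_le_sum fun x _ => sq_pert (hf x) (hg x) hμ'1
    _ = ∑ x ∈ s, ‖g x - μ'‖ ^ 2 + 4 * ∑ x ∈ s, ‖f x - g x‖ := by
        rw [Finset.sum_add_distrib, Finset.mul_sum]
    _ ≤ ∑ x ∈ s, ‖g x - μ‖ ^ 2 + 4 * ∑ x ∈ s, ‖f x - g x‖ := by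
        gcongr with x hx
        exact hμ'2 _ (hg x)

lemma sum_parts (C : Fin k → Finset X) (hC : IsClustering k C) (h : X → ℝ) :
    ∑ i, ∑ x ∈ C i, h x = ∑ x, h x := by
  rw [← Finset.sum_biUnion, hC.2]
  intro i _ j _ hij
  exact hC.1 i j hij

lemma cost_pert (f g : X → Euc n) (hf : ∀ x, ‖f x‖ ≤ 1) (hg : ∀ x, ‖g x‖ ≤ 1)
    (C : Fin k → Finset X) (hC : IsClustering k C) :
    costClustering k f C ≤ costClustering k g C + 4 * dL1 f g := by
  unfold costClustering dL1
  have hN : (0:ℝ) ≤ 1 / (Fintype.card X : ℝ) := by positivity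
  have hsum : ∑ i, (⨅ μ : Euc n, ∑ x ∈ C i, ‖f x - μ‖ ^ 2) ≤
      ∑ i, (⨅ μ : Euc n, ∑ x ∈ C i, ‖g x - μ‖ ^ 2) + 4 * ∑ x, ‖f x - g x‖ := by
    calc ∑ i, (⨅ μ : Euc n, ∑ x ∈ C i, ‖f x - μ‖ ^ 2)
        ≤ ∑ i, ((⨅ μ : Euc n, ∑ x ∈ C i, ‖g x - μ‖ ^ 2) + 4 * ∑ x ∈ C i, ‖f x - g x‖) :=
          Finset.sum_le_sum fun i _ => inf_pert (C i) f g hf hg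
      _ = ∑ i, (⨅ μ : Euc n, ∑ x ∈ C i, ‖g x - μ‖ ^ 2) +
            4 * ∑ i, ∑ x ∈ C i, ‖f x - g x‖ := by
          rw [Finset.sum_add_distrib, Finset.mul_sum]
      _ = _ := by rw [sum_parts C hC]
  calc 1 / (Fintype.card X : ℝ) * ∑ i, (⨅ μ : Euc n, ∑ x ∈ C i, ‖f x - μ‖ ^ 2)
      ≤ 1 / (Fintype.card X : ℝ) *
          (∑ i, (⨅ μ : Euc n, ∑ x ∈ C i, ‖g x - μ‖ ^ 2) + 4 * ∑ x, ‖f x - g x‖) :=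
        mul_le_mul_of_nonneg_left hsum hN
    _ = _ := by ring

lemma nearest_min [NeZero k] (f : X → Euc n) (μ : Fin k → Euc n) (x : X) (l : Fin k) :
    ‖f x - μ (nearestIdx f μ x)‖ ≤ ‖f x - μ l‖ := by
  have h : nearestIdx f μ x ∈
      Finset.univ.filter fun j => ∀ l, ‖f x - μ j‖ ≤ ‖f x - μ l‖ :=
    Finset.min'_mem _ _
  exact (Finset.mem_filter.mp h).2 l

lemma voronoi_isClustering [NeZero k] (f : X → Euc n) (μ : Fin k → Euc n) :
    IsClustering k (voronoiClustering f μ) := by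
  constructor
  · intro i j hij
    rw [Finset.disjoint_left]
    intro x hx hx'
    simp only [voronoiClustering, Finset.mem_filter] at hx hx'
    exact hij (hx.2 ▸ hx'.2)
  · ext x
    simp [voronoiClustering, Finset.mem_biUnion]

lemma iInf_eq_nearest [NeZero k] (f : X → Euc n) (μ : Fin k → Euc n) (x : X) :
    (⨅ j : Fin k, ‖f x - μ j‖ ^ 2) = ‖f x - μ (nearestIdx f μ x)‖ ^ 2 := by
  apply le_antisymm
  · exact ciInf_le (Set.Finite.bddBelow (Set.finite_range _)) _
  · apply le_ciInf
    intro j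
    exact pow_le_pow_left₀ (norm_nonneg _) (nearest_min f μ x j) 2

lemma cost_voronoi_le [NeZero k] (f : X → Euc n) (μ : Fin k → Euc n) :
    costClustering k f (voronoiClustering f μ) ≤ costCenters k f μ := by
  unfold costClustering costCenters
  have hN : (0:ℝ) ≤ 1 / (Fintype.card X : ℝ) := by positivity
  apply mul_le_mul_of_nonneg_left _ hN
  calc ∑ i, (⨅ ν : Euc n, ∑ x ∈ voronoiClustering f μ i, ‖f x - ν‖ ^ 2)
      ≤ ∑ i, ∑ x ∈ voronoiClustering f μ i, ‖f x - μ i‖ ^ 2 :=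
        Finset.sum_le_sum fun i _ =>
          ciInf_le (bdd0 _ fun ν => sum_sq_nonneg _ f ν) (μ i)
    _ = ∑ i, ∑ x ∈ voronoiClustering f μ i, (⨅ j : Fin k, ‖f x - μ j‖ ^ 2) := by
        apply Finset.sum_congr rfl
        intro i _
        apply Finset.sum_congr rfl
        intro x hx
        have : nearestIdx f μ x = i := (Finset.mem_filter.mp hx).2
        rw [iInf_eq_nearest, this]
    _ = ∑ x, ⨅ j : Fin k, ‖f x - μ j‖ ^ 2 :=
        sum_parts _ (voronoi_isClustering f μ) _

lemma centers_le_clustering [Nonempty X] [NeZero k] (f : X → Euc n)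
    (P : Fin k → Finset X) (hP : IsClustering k P) {δ : ℝ} (hδ : 0 < δ) :
    ∃ ν : Fin k → Euc n, costCenters k f ν ≤ costClustering k f P + δ := by
  have hk : (0:ℝ) < k := by
    have := Nat.pos_of_ne_zero (NeZero.ne k); exact_mod_cast this
  have hNpos : (0:ℝ) < Fintype.card X := by
    have := Fintype.card_pos (α := X); exact_mod_cast this
  set c : ℝ := δ * Fintype.card X / k with hc
  have hcpos : 0 < c := by positivity
  have hex : ∀ i : Fin k, ∃ ν : Euc n,
      ∑ x ∈ P i, ‖f x - ν‖ ^ 2 ≤ (⨅ μ : Euc n, ∑ x ∈ P i, ‖f x - μ‖ ^ 2) + c := by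
    intro i
    have hlt : (⨅ μ : Euc n, ∑ x ∈ P i, ‖f x - μ‖ ^ 2) <
        (⨅ μ : Euc n, ∑ x ∈ P i, ‖f x - μ‖ ^ 2) + c := by linarith
    obtain ⟨ν, hν⟩ := exists_lt_of_ciInf_lt hlt
    exact ⟨ν, hν.le⟩
  choose ν hν using hex
  refine ⟨ν, ?_⟩
  unfold costCenters costClustering
  have hN : (0:ℝ) ≤ 1 / (Fintype.card X : ℝ) := by positivity
  have hsum : ∑ x, (⨅ j : Fin k, ‖f x - ν j‖ ^ 2) ≤
      ∑ i, (⨅ μ : Euc n, ∑ x ∈ P i, ‖f x - μ‖ ^ 2) + (k : ℝ) * c := by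
    calc ∑ x, (⨅ j : Fin k, ‖f x - ν j‖ ^ 2)
        = ∑ i, ∑ x ∈ P i, (⨅ j : Fin k, ‖f x - ν j‖ ^ 2) :=
          (sum_parts P hP _).symm
      _ ≤ ∑ i, ∑ x ∈ P i, ‖f x - ν i‖ ^ 2 := by
          apply Finset.sum_le_sum
          intro i _
          apply Finset.sum_le_sum
          intro x _
          exact ciInf_le (Set.Finite.bddBelow (Set.finite_range _)) i
      _ ≤ ∑ i, ((⨅ μ : Euc n, ∑ x ∈ P i, ‖f x - μ‖ ^ 2) + c) :=
          Finset.sum_le_sum fun i _ => hν i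
      _ = ∑ i, (⨅ μ : Euc n, ∑ x ∈ P i, ‖f x - μ‖ ^ 2) + (k : ℝ) * c := by
          rw [Finset.sum_add_distrib, Finset.sum_const, Finset.card_univ,
            Fintype.card_fin, nsmul_eq_mul]
  calc 1 / (Fintype.card X : ℝ) * ∑ x, (⨅ j : Fin k, ‖f x - ν j‖ ^ 2)
      ≤ 1 / (Fintype.card X : ℝ) *
          (∑ i, (⨅ μ : Euc n, ∑ x ∈ P i, ‖f x - μ‖ ^ 2) + (k : ℝ) * c) :=
        mul_le_mul_of_nonneg_left hsum hN
    _ = 1 / (Fintype.card X : ℝ) *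
          ∑ i, (⨅ μ : Euc n, ∑ x ∈ P i, ‖f x - μ‖ ^ 2) + δ := by
        rw [hc]; field_simp

lemma optimal_clustering_le [Nonempty X] [NeZero k] (f : X → Euc n)
    (Cf : Fin k → Finset X) (h : HasUniqueOptClustering f Cf)
    (P : Fin k → Finset X) (hP : IsClustering k P) :
    costClustering k f Cf ≤ costClustering k f P := by
  obtain ⟨⟨μ, hμ⟩, huniq⟩ := h
  have hCf : Cf = voronoiClustering f μ := (huniq μ hμ).symm
  apply le_of_forall_pos_le_add
  intro δ hδ
  obtain ⟨ν, hν⟩ := centers_le_clustering f P hP hδ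
  calc costClustering k f Cf ≤ costCenters k f μ := hCf ▸ cost_voronoi_le f μ
    _ ≤ costCenters k f ν := hμ ν
    _ ≤ costClustering k f P + δ := hν

lemma clustering_of_unique [Nonempty X] [NeZero k] (f : X → Euc n)
    (Cf : Fin k → Finset X) (h : HasUniqueOptClustering f Cf) :
    IsClustering k Cf := by
  obtain ⟨⟨μ, hμ⟩, huniq⟩ := h
  rw [← huniq μ hμ]
  exact voronoi_isClustering f μ

lemma dL1_nonneg (f g : X → Euc n) : 0 ≤ dL1 f g := by
  unfold dL1
  have : (0:ℝ) ≤ ∑ x, ‖f x - g x‖ := Finset.sum_nonneg fun x _ => norm_nonneg _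
  positivity

lemma dL1_symm (f g : X → Euc n) : dL1 f g = dL1 g f := by
  unfold dL1
  congr 1
  exact Finset.sum_congr rfl fun x _ => norm_sub_rev _ _

end Helpers

/-- L₁-close mappings with (η, ε)-unique solutions have 2ε-close optimal
k-means clusterings. -/
theorem close_maps_close_clusterings (X : Type*) [Fintype X] [DecidableEq X] [Nonempty X]
    (n k : ℕ) [NeZero k] (η ε : ℝ) (hη : 0 < η) (hε : 0 < ε)
    (f₁ f₂ : X → Euc n) (hb₁ : ∀ x, ‖f₁ x‖ ≤ 1) (hb₂ : ∀ x, ‖f₂ x‖ ≤ 1)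
    (C₁ C₂ : Fin k → Finset X)
    (h₁ : HasUniqueSolution f₁ C₁ η ε) (h₂ : HasUniqueSolution f₂ C₂ η ε)
    (hd : dL1 f₁ f₂ < η / 12) :
    clusterDiff k C₁ C₂ < 2 * ε := by
  have hC1 : IsClustering k C₁ := clustering_of_unique f₁ C₁ h₁.1
  have hC2 : IsClustering k C₂ := clustering_of_unique f₂ C₂ h₂.1
  have hd0 : 0 ≤ dL1 f₁ f₂ := dL1_nonneg f₁ f₂
  have key : costClustering k f₁ C₂ < costClustering k f₁ C₁ + η := by
    have s1 : costClustering k f₁ C₂ ≤ costClustering k f₂ C₂ + 4 * dL1 f₁ f₂ :=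
      cost_pert f₁ f₂ hb₁ hb₂ C₂ hC2
    have s2 : costClustering k f₂ C₂ ≤ costClustering k f₂ C₁ :=
      optimal_clustering_le f₂ C₂ h₂.1 C₁ hC1
    have s3 : costClustering k f₂ C₁ ≤ costClustering k f₁ C₁ + 4 * dL1 f₁ f₂ := by
      have := cost_pert f₂ f₁ hb₂ hb₁ C₁ hC1
      rwa [dL1_symm f₂ f₁] at this
    linarith
  have := h₁.2 C₂ hC2 key
  linarith
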